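/- Let C ⊆ ℝ^k be a compact convex set with nonempty interior, and let ∂φ : S^{k−1} → ∂C be a continuous map such that for each unit vector t ∈ S^{k−1}, ∂φ(t) maximizes the linear function y ↦ ⟨t, y⟩ over C. Then ∂φ is a homotopy equivalence between S^{k−1} and the boundary ∂C. -/

import Mathlib

open RealInnerProductSpace

open unitInterval in
lemma aux_homotopic {E X : Type*} [NormedAddCommGroup E] [InnerProductSpace ℝ E]
    [TopologicalSpace X] (f g : C(X, Metric.sphere (0:E) 1))
    (hfg : ∀ x, (f x : E) ≠ -(g x : E)) : f.Homotopic g := by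
  have hnf : ∀ x : X, ‖(f x : E)‖ = 1 := fun x => by
    simpa [mem_sphere_zero_iff_norm] using (f x).2
  have hng : ∀ x : X, ‖(g x : E)‖ = 1 := fun x => by
    simpa [mem_sphere_zero_iff_norm] using (g x).2
  set v : I × X → E := fun p => (1 - (p.1 : ℝ)) • (f p.2 : E) + (p.1 : ℝ) • (g p.2 : E) with hv
  have hvne : ∀ p, v p ≠ 0 := by
    rintro ⟨s, x⟩ h0
    have h1 : (1 - (s:ℝ)) • (f x : E) = -((s:ℝ) • (g x : E)) := by
      rw [eq_neg_iff_add_eq_zero]; exact h0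
    have hn : (1 - (s:ℝ)) = (s:ℝ) := by
      have := congrArg norm h1
      simpa [norm_smul, abs_of_nonneg s.2.1, abs_of_nonneg (sub_nonneg.mpr s.2.2), hnf, hng]
        using this
    have hs : (s:ℝ) ≠ 0 := by
      intro h; rw [h] at hn; norm_num at hn
    rw [hn] at h1
    refine hfg x ?_
    have h2 : (s:ℝ) • (f x : E) = (s:ℝ) • (-(g x : E)) := by rw [h1, smul_neg]
    exact smul_right_injective E hs h2
  have hvcont : Continuous v := by
    apply Continuous.add
    · exact (continuous_const.sub (continuous_subtype_val.comp continuous_fst)).smul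
        (continuous_subtype_val.comp (f.continuous.comp continuous_snd))
    · exact (continuous_subtype_val.comp continuous_fst).smul
        (continuous_subtype_val.comp (g.continuous.comp continuous_snd))
  have hmem : ∀ p, ‖v p‖⁻¹ • v p ∈ Metric.sphere (0:E) 1 := fun p => by
    simp [mem_sphere_zero_iff_norm, norm_smul, inv_mul_cancel₀ (norm_ne_zero_iff.mpr (hvne p))]
  refine ⟨{ toFun := fun p => ⟨‖v p‖⁻¹ • v p, hmem p⟩
            continuous_toFun := ?_
            map_zero_left := ?_
            map_one_left := ?_ }⟩
  · exact Continuous.subtype_mk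
      ((hvcont.norm.inv₀ fun p => norm_ne_zero_iff.mpr (hvne p)).smul hvcont) _
  · intro x
    have h0 : v ((0 : I), x) = (f x : E) := by simp [hv]
    exact Subtype.ext (by simp [h0, hnf x])
  · intro x
    have h0 : v ((1 : I), x) = (g x : E) := by simp [hv]
    exact Subtype.ext (by simp [h0, hng x])

lemma stmt_4_aux {E : Type*} [NormedAddCommGroup E] [InnerProductSpace ℝ E]
    (C : Set E)
    (hC : IsCompact C) (hconv : Convex ℝ C) (hint : (interior C).Nonempty)
    (φ : C(Metric.sphere (0 : E) 1, frontier C))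
    (hmax : ∀ t : Metric.sphere (0 : E) 1, ∀ y ∈ C,
      ⟪(t : E), y⟫ ≤ ⟪(t : E), ((φ t : frontier C) : E)⟫) :
    ∃ h : C(frontier C, Metric.sphere (0 : E) 1),
      (φ.comp h).Homotopic (ContinuousMap.id _) ∧
      (h.comp φ).Homotopic (ContinuousMap.id _) := by
  obtain ⟨x₀, hx₀⟩ := hint
  have hCclosed : IsClosed C := hC.isClosed
  have hclC : closure C = C := hCclosed.closure_eq
  have hfrsubC : frontier C ⊆ C := hCclosed.frontier_subset
  have hfrnotint : ∀ y ∈ frontier C, y ∉ interior C := by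
    intro y hy
    rw [← closure_diff_interior] at hy
    exact hy.2
  have hne : ∀ y : frontier C, ((y : E) - x₀) ≠ 0 := by
    intro y
    refine sub_ne_zero.mpr fun h => hfrnotint _ y.2 (h ▸ hx₀)
  have hval : ∀ y : frontier C, ‖((y:E) - x₀)‖⁻¹ • ((y:E) - x₀) ∈ Metric.sphere (0:E) 1 :=
    fun y => by
      simp [mem_sphere_zero_iff_norm, norm_smul,
        inv_mul_cancel₀ (norm_ne_zero_iff.mpr (hne y))]
  set r : C(frontier C, Metric.sphere (0:E) 1) :=
    ⟨fun y => ⟨‖((y:E) - x₀)‖⁻¹ • ((y:E) - x₀), hval y⟩, by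
      apply Continuous.subtype_mk
      have hc : Continuous fun y : frontier C => (y:E) - x₀ :=
        continuous_subtype_val.sub continuous_const
      exact (hc.norm.inv₀ fun y => norm_ne_zero_iff.mpr (hne y)).smul hc⟩ with hr
  -- injectivity
  have key : ∀ y z : frontier C, ‖(y:E)-x₀‖ < ‖(z:E)-x₀‖ →
      ‖(y:E)-x₀‖⁻¹ • ((y:E)-x₀) = ‖(z:E)-x₀‖⁻¹ • ((z:E)-x₀) → False := by
    intro y z hlt heq
    set a := ‖(y:E)-x₀‖ with ha
    set b := ‖(z:E)-x₀‖ with hb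
    have ha0 : 0 < a := norm_pos_iff.mpr (hne y)
    have hb0 : 0 < b := norm_pos_iff.mpr (hne z)
    have h1 : (y:E) - x₀ = (a/b) • ((z:E) - x₀) := by
      have := congrArg (a • ·) heq
      simpa [smul_smul, mul_inv_cancel₀ ha0.ne', div_eq_mul_inv] using this
    have h2 : (y:E) = (1 - a/b) • x₀ + (a/b) • (z:E) := by
      have := h1
      rw [smul_sub] at this
      rw [sub_eq_iff_eq_add] at this
      rw [this, sub_smul, one_smul]
      abel
    have hy_int : (y:E) ∈ interior C := by
      rw [h2]
      refine hconv.combo_interior_closure_mem_interior hx₀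
        (subset_closure (hfrsubC z.2)) ?_ ?_ (by ring)
      · have : a/b < 1 := (div_lt_one hb0).mpr hlt
        linarith
      · positivity
    exact hfrnotint _ y.2 hy_int
  have hinj : Function.Injective r := by
    intro y z hyz
    have heq : ‖(y:E)-x₀‖⁻¹ • ((y:E)-x₀) = ‖(z:E)-x₀‖⁻¹ • ((z:E)-x₀) :=
      congrArg Subtype.val hyz
    rcases lt_trichotomy ‖(y:E)-x₀‖ ‖(z:E)-x₀‖ with h | h | h
    · exact absurd heq fun heq => key y z h heq
    · have ha0 : ‖(y:E)-x₀‖ ≠ 0 := norm_ne_zero_iff.mpr (hne y)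
      have : (y:E) - x₀ = (z:E) - x₀ := by
        have := congrArg (‖(y:E)-x₀‖ • ·) heq
        simpa [h, smul_smul, mul_inv_cancel₀ (h ▸ ha0 : ‖(z:E)-x₀‖ ≠ 0),
          mul_inv_cancel₀ ha0] using this
      exact Subtype.ext (sub_left_inj.mp this)
    · exact absurd heq.symm fun heq => key z y h heq
  have hsurj : Function.Surjective r := by
    intro t
    have ht1 : ‖(t:E)‖ = 1 := by simpa [mem_sphere_zero_iff_norm] using t.2
    set K : Set ℝ := {s : ℝ | x₀ + s • (t:E) ∈ C} with hK
    have hKne : K.Nonempty :=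
      ⟨0, show x₀ + (0:ℝ) • (t:E) ∈ C by simpa using interior_subset hx₀⟩
    have hKclosed : IsClosed K := by
      have : Continuous fun s : ℝ => x₀ + s • (t:E) :=
        continuous_const.add (continuous_id.smul continuous_const)
      exact hCclosed.preimage this
    obtain ⟨R, hR⟩ := hC.isBounded.subset_closedBall (0:E)
    have hKbdd : BddAbove K := by
      refine ⟨R + ‖x₀‖, fun s hs => ?_⟩
      have h1 : ‖x₀ + s • (t:E)‖ ≤ R := by
        simpa [Metric.mem_closedBall, dist_zero_right] using hR hs
      have h2 : ‖s • (t:E)‖ ≤ R + ‖x₀‖ := by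
        calc ‖s • (t:E)‖ = ‖x₀ + s • (t:E) - x₀‖ := by rw [add_sub_cancel_left]
          _ ≤ ‖x₀ + s • (t:E)‖ + ‖x₀‖ := norm_sub_le _ _
          _ ≤ R + ‖x₀‖ := by linarith
      calc s ≤ |s| := le_abs_self s
        _ = ‖s • (t:E)‖ := by rw [norm_smul, ht1, mul_one]; rfl
        _ ≤ R + ‖x₀‖ := h2
    set s₀ := sSup K with hs₀
    have hs₀K : s₀ ∈ K := hKclosed.csSup_mem hKne hKbdd
    obtain ⟨δ, hδ0, hδ⟩ := Metric.isOpen_iff.mp isOpen_interior x₀ hx₀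
    have hεK : δ/2 ∈ K := by
      have hd : dist (x₀ + (δ/2) • (t:E)) x₀ = δ/2 := by
        rw [dist_eq_norm, add_sub_cancel_left, norm_smul, ht1, mul_one, Real.norm_eq_abs,
          abs_of_pos (half_pos hδ0)]
      have hb : x₀ + (δ/2) • (t:E) ∈ Metric.ball x₀ δ := by
        rw [Metric.mem_ball, hd]; linarith
      show x₀ + (δ/2) • (t:E) ∈ C
      exact interior_subset (hδ hb)
    have hs₀pos : 0 < s₀ := lt_of_lt_of_le (by linarith) (le_csSup hKbdd hεK)
    set y₀ : E := x₀ + s₀ • (t:E) with hy₀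
    have hy₀C : y₀ ∈ C := hs₀K
    have hy₀fr : y₀ ∈ frontier C := by
      rw [← closure_diff_interior]
      refine ⟨subset_closure hy₀C, fun hy₀int => ?_⟩
      obtain ⟨δ', hδ'0, hδ'⟩ := Metric.isOpen_iff.mp isOpen_interior y₀ hy₀int
      have : s₀ + δ'/2 ∈ K := by
        have hm : x₀ + (s₀ + δ'/2) • (t:E) ∈ Metric.ball y₀ δ' := by
          simp only [Metric.mem_ball, dist_eq_norm, hy₀]
          have : x₀ + (s₀ + δ'/2) • (t:E) - (x₀ + s₀ • (t:E)) = (δ'/2) • (t:E) := by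
            rw [add_smul]; abel
          rw [this, norm_smul, ht1, mul_one]
          rw [Real.norm_eq_abs, abs_of_nonneg (by linarith : (0:ℝ) ≤ δ'/2)]
          linarith
        show x₀ + (s₀ + δ'/2) • (t:E) ∈ C
        exact interior_subset (hδ' hm)
      have := le_csSup hKbdd this
      linarith
    refine ⟨⟨y₀, hy₀fr⟩, ?_⟩
    apply Subtype.ext
    show ‖y₀ - x₀‖⁻¹ • (y₀ - x₀) = (t:E)
    have h1 : y₀ - x₀ = s₀ • (t:E) := by rw [hy₀]; abel
    rw [h1, norm_smul, ht1, mul_one, Real.norm_eq_abs, abs_of_pos hs₀pos, smul_smul,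
      inv_mul_cancel₀ hs₀pos.ne', one_smul]
  haveI : CompactSpace (frontier C) :=
    isCompact_iff_compactSpace.mp (hC.of_isClosed_subset isClosed_frontier hfrsubC)
  set eqv : frontier C ≃ Metric.sphere (0:E) 1 := Equiv.ofBijective r ⟨hinj, hsurj⟩ with heqv
  set H : frontier C ≃ₜ Metric.sphere (0:E) 1 :=
    Continuous.homeoOfEquivCompactToT2 (f := eqv) r.continuous with hH
  have hHr : ∀ y, H y = r y := fun y => rfl
  -- positivity of inner product
  have hpos : ∀ t : Metric.sphere (0:E) 1, (0:ℝ) < ⟪(t:E), ((r (φ t) : E))⟫ := by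
    intro t
    have ht1 : ‖(t:E)‖ = 1 := by simpa [mem_sphere_zero_iff_norm] using t.2
    obtain ⟨δ, hδ0, hδ⟩ := Metric.isOpen_iff.mp isOpen_interior x₀ hx₀
    have hεmem : x₀ + (δ/2) • (t:E) ∈ C := by
      have hd : dist (x₀ + (δ/2) • (t:E)) x₀ = δ/2 := by
        rw [dist_eq_norm, add_sub_cancel_left, norm_smul, ht1, mul_one, Real.norm_eq_abs,
          abs_of_pos (half_pos hδ0)]
      have hb : x₀ + (δ/2) • (t:E) ∈ Metric.ball x₀ δ := by
        rw [Metric.mem_ball, hd]; linarith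
      exact interior_subset (hδ hb)
    have hm := hmax t _ hεmem
    have htt : ⟪(t:E), (t:E)⟫ = 1 := by
      rw [real_inner_self_eq_norm_sq, ht1]; norm_num
    rw [inner_add_right, real_inner_smul_right, htt, mul_one] at hm
    have hnum : 0 < ⟪(t:E), ((φ t : frontier C) : E) - x₀⟫ := by
      rw [inner_sub_right]; linarith
    show (0:ℝ) < ⟪(t:E), ‖((φ t : frontier C) : E) - x₀‖⁻¹ • (((φ t : frontier C) : E) - x₀)⟫
    rw [real_inner_smul_right]
    have : 0 < ‖((φ t : frontier C) : E) - x₀‖⁻¹ :=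
      inv_pos.mpr (norm_pos_iff.mpr (hne (φ t)))
    positivity
  -- h ∘ φ homotopic to id
  have hψ : (r.comp φ).Homotopic (ContinuousMap.id _) := by
    apply aux_homotopic
    intro t
    intro hcontra
    have : ⟪(t:E), ((r (φ t)) : E)⟫ = -1 := by
      show ⟪(t:E), ((r.comp φ) t : E)⟫ = -1
      rw [hcontra]
      show ⟪(t:E), -((t:E))⟫ = -1
      rw [inner_neg_right, real_inner_self_eq_norm_sq]
      simp [show ‖(t:E)‖ = 1 by simpa [mem_sphere_zero_iff_norm] using t.2]
    have := hpos t
    linarith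
  set hinvm : C(Metric.sphere (0:E) 1, frontier C) := (H.symm : C(Metric.sphere (0:E) 1, frontier C)) with hhi
  have e1 : hinvm.comp ((r.comp φ).comp r) = φ.comp r := by
    ext y
    show ((H.symm (r (φ (r y))) : frontier C) : E) = ((φ (r y) : frontier C) : E)
    congr 1
    exact H.symm_apply_apply (φ (r y))
  have e2 : hinvm.comp ((ContinuousMap.id _).comp r) = ContinuousMap.id _ := by
    ext y
    show ((H.symm (r y) : frontier C) : E) = ((y : frontier C) : E)
    congr 1
    exact H.symm_apply_apply y
  have h1 : ((r.comp φ).comp r).Homotopic ((ContinuousMap.id _).comp r) :=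
    ContinuousMap.Homotopic.comp hψ (ContinuousMap.Homotopic.refl r)
  have h2 := ContinuousMap.Homotopic.comp (ContinuousMap.Homotopic.refl hinvm) h1
  rw [e1, e2] at h2
  exact ⟨r, h2, hψ⟩

theorem stmt_4 {k : ℕ} (C : Set (EuclideanSpace ℝ (Fin k)))
    (hC : IsCompact C) (hconv : Convex ℝ C) (hint : (interior C).Nonempty)
    (φ : C(Metric.sphere (0 : EuclideanSpace ℝ (Fin k)) 1, frontier C))
    (hmax : ∀ t : Metric.sphere (0 : EuclideanSpace ℝ (Fin k)) 1, ∀ y ∈ C,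
      ⟪(t : EuclideanSpace ℝ (Fin k)), y⟫ ≤
        ⟪(t : EuclideanSpace ℝ (Fin k)), ((φ t : frontier C) : EuclideanSpace ℝ (Fin k))⟫) :
    ∃ h : C(frontier C, Metric.sphere (0 : EuclideanSpace ℝ (Fin k)) 1),
      (φ.comp h).Homotopic (ContinuousMap.id _) ∧
      (h.comp φ).Homotopic (ContinuousMap.id _) :=
  stmt_4_aux C hC hconv hint φ hmax
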